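/- arXiv:2008.00713 — 2 statements merged into one kernel-verified Lean document; each statement's English description precedes it below -/
import Mathlib

section
/- The encoding satisfies the necessary condition for quantum error correction: for every single-qutrit error σ ∈ {X₁, X₂, Z₁, Z₂, X₁Z₁, X₁Z₂, X₂Z₁, X₂Z₂} and every position j ∈ Fin 7, the three diagonal matrix elements agree: ⟨0_L| σ^(j) |0_L⟩ = ⟨1_L| σ^(j) |1_L⟩ = ⟨2_L| σ^(j) |2_L⟩, where ⟨·|·⟩ is the standard Hermitian inner product on V and M^(j) denotes M applied at position j. -/
open Complex Matrix

noncomputable section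

/-- ω = exp(2πi/3), a primitive cube root of unity. -/
def ω : ℂ := Complex.exp (2 * (Real.pi : ℂ) * Complex.I / 3)

/-- The ternary cyclic shift matrix: X₁ e_j = e_{(j+1) mod 3}. -/
def X1 : Matrix (Fin 3) (Fin 3) ℂ := Matrix.of fun i j => if i = j + 1 then (1 : ℂ) else 0

/-- The ternary phase matrix Z₁ = diag(1, ω, ω²). -/
def Z1 : Matrix (Fin 3) (Fin 3) ℂ := Matrix.diagonal ![1, ω, ω ^ 2]

/-- X₂ = X₁·X₁. -/
def X2 : Matrix (Fin 3) (Fin 3) ℂ := X1 * X1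

/-- Z₂ = Z₁·Z₁. -/
def Z2 : Matrix (Fin 3) (Fin 3) ℂ := Z1 * Z1

/-- The 7-qutrit state space. -/
abbrev V : Type := (Fin 7 → Fin 3) → ℂ

/-- Standard basis vector of the 7-qutrit state space indexed by a ternary string. -/
def e (s : Fin 7 → Fin 3) : V := fun t => if t = s then 1 else 0

/-- Action on the 7-qutrit space of a tensor product M₀ ⊗ M₁ ⊗ … ⊗ M₆ of 3×3 matrices. -/
def act (M : Fin 7 → Matrix (Fin 3) (Fin 3) ℂ) (v : V) : V :=
  fun s => ∑ t : Fin 7 → Fin 3, (∏ j : Fin 7, M j (s j) (t j)) * v t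

/-- `applyAt M j` applies the single-qutrit operator `M` at position `j` (identity elsewhere). -/
def applyAt (M : Matrix (Fin 3) (Fin 3) ℂ) (j : Fin 7) : V → V :=
  act (fun k => if k = j then M else 1)

/-- The unnormalized logical codeword |0_L⟩. -/
def c0 : V :=
  e ![0,0,0,0,0,0,0] + e ![1,0,2,0,1,0,2] + e ![2,0,1,0,2,0,1]
    + e ![0,1,0,2,0,1,0] + e ![1,1,2,2,1,1,2] + e ![2,1,1,2,2,1,1]
    + e ![0,2,0,1,0,2,0] + e ![1,2,2,1,1,2,2] + e ![2,2,1,1,2,2,1]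

/-- The unnormalized logical codeword |1_L⟩. -/
def c1 : V :=
  e ![1,1,1,1,1,1,1] + e ![2,1,0,1,2,1,0] + e ![0,1,2,1,0,1,2]
    + e ![1,2,1,0,1,2,1] + e ![2,2,0,0,2,2,0] + e ![0,2,2,0,0,2,2]
    + e ![1,0,1,2,1,0,1] + e ![2,0,0,2,2,0,0] + e ![0,0,2,2,0,0,2]

/-- The unnormalized logical codeword |2_L⟩. -/
def c2 : V :=
  e ![2,2,2,2,2,2,2] + e ![0,2,1,2,0,2,1] + e ![1,2,0,2,1,2,0]
    + e ![2,0,2,1,2,0,2] + e ![0,0,1,1,0,0,1] + e ![1,0,0,1,1,0,0]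
    + e ![2,1,2,0,2,1,2] + e ![0,1,1,0,0,1,1] + e ![1,1,0,0,1,1,0]

/-- The three logical codewords. -/
def cw : Fin 3 → V := ![c0, c1, c2]

/-- Phase-error stabilizer S₁ = X₁⊗I⊗X₂⊗I⊗X₁⊗I⊗X₂. -/
def S1 : V → V := act ![X1, 1, X2, 1, X1, 1, X2]

/-- Phase-error stabilizer S₂ = I⊗X₁⊗I⊗X₂⊗I⊗X₁⊗I. -/
def S2 : V → V := act ![1, X1, 1, X2, 1, X1, 1]

/-- Bit-error stabilizer S₃ = Z₁⊗Z₂⊗Z₁⊗Z₂⊗I⊗I⊗I. -/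
def S3 : V → V := act ![Z1, Z2, Z1, Z2, 1, 1, 1]

/-- Bit-error stabilizer S₄ = I⊗I⊗I⊗Z₁⊗Z₂⊗Z₁⊗Z₂. -/
def S4 : V → V := act ![1, 1, 1, Z1, Z2, Z1, Z2]

/-- Bit-error stabilizer S₅ = I⊗Z₁⊗Z₂⊗Z₁⊗Z₂⊗I⊗I. -/
def S5 : V → V := act ![1, Z1, Z2, Z1, Z2, 1, 1]

/-- Bit-error stabilizer S₆ = I⊗I⊗Z₁⊗Z₂⊗Z₁⊗Z₂⊗I. -/
def S6 : V → V := act ![1, 1, Z1, Z2, Z1, Z2, 1]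

/-- The standard Hermitian inner product on the 7-qutrit state space. -/
def ip (u v : V) : ℂ := ∑ s : Fin 7 → Fin 3, (starRingEnd ℂ) (u s) * v s


lemma ip_e (a : Fin 7 → Fin 3) (v : V) : ip (e a) v = v a := by
  unfold ip e
  rw [Finset.sum_eq_single a]
  · simp
  · intro b _ hb; simp [if_neg hb]
  · simp

lemma act_e (N : Fin 7 → Matrix (Fin 3) (Fin 3) ℂ) (b : Fin 7 → Fin 3) :
    act N (e b) = fun a => ∏ k, N k (a k) (b k) := by
  funext a
  unfold act e
  rw [Finset.sum_eq_single b]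
  · simp
  · intro t _ ht; simp [if_neg ht]
  · simp

lemma ip_e_applyAt (M : Matrix (Fin 3) (Fin 3) ℂ) (j : Fin 7) (a b : Fin 7 → Fin 3) :
    ip (e a) (applyAt M j (e b)) = ∏ k, (if k = j then M else 1) (a k) (b k) := by
  unfold applyAt
  rw [act_e, ip_e]

lemma term_diag (M : Matrix (Fin 3) (Fin 3) ℂ) (j : Fin 7) (a : Fin 7 → Fin 3) :
    ip (e a) (applyAt M j (e a)) = M (a j) (a j) := by
  rw [ip_e_applyAt, ← Finset.mul_prod_erase Finset.univ _ (Finset.mem_univ j), if_pos rfl]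
  rw [Finset.prod_eq_one, mul_one]
  intro k hk
  rw [if_neg (Finset.ne_of_mem_erase hk), Matrix.one_apply_eq]

lemma term_far (M : Matrix (Fin 3) (Fin 3) ℂ) (j : Fin 7) (a b : Fin 7 → Fin 3)
    (h : ∃ k1 k2 : Fin 7, k1 ≠ k2 ∧ a k1 ≠ b k1 ∧ a k2 ≠ b k2) :
    ip (e a) (applyAt M j (e b)) = 0 := by
  rw [ip_e_applyAt]
  obtain ⟨k1, k2, h12, h1, h2⟩ := h
  rcases ne_or_eq k1 j with hk | hk
  · exact Finset.prod_eq_zero (Finset.mem_univ k1)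
      (by rw [if_neg hk, Matrix.one_apply_ne h1])
  · exact Finset.prod_eq_zero (Finset.mem_univ k2)
      (by rw [if_neg (by rw [← hk]; exact h12.symm), Matrix.one_apply_ne h2])

lemma applyAt_add (M : Matrix (Fin 3) (Fin 3) ℂ) (j : Fin 7) (v w : V) :
    applyAt M j (v + w) = applyAt M j v + applyAt M j w := by
  funext s
  unfold applyAt act
  simp [mul_add, Finset.sum_add_distrib]

lemma ip_add_left (u u' v : V) : ip (u + u') v = ip u v + ip u' v := by
  unfold ip; simp [add_mul, Finset.sum_add_distrib]

lemma ip_add_right (u v w : V) : ip u (v + w) = ip u v + ip u w := by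
  unfold ip; simp [mul_add, Finset.sum_add_distrib]

lemma cons_val_five' {α : Type*} (a₀ a₁ a₂ a₃ a₄ a₅ a₆ : α) :
    ![a₀,a₁,a₂,a₃,a₄,a₅,a₆] 5 = a₅ := rfl

lemma cons_val_six' {α : Type*} (a₀ a₁ a₂ a₃ a₄ a₅ a₆ : α) :
    ![a₀,a₁,a₂,a₃,a₄,a₅,a₆] 6 = a₆ := rfl

lemma diag_c0 (M : Matrix (Fin 3) (Fin 3) ℂ) (j : Fin 7) :
    ip c0 (applyAt M j c0) = 3 * (M 0 0 + M 1 1 + M 2 2) := by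
  unfold c0
  simp (config := { decide := true }) only [applyAt_add, ip_add_left, ip_add_right,
    term_diag, term_far]
  fin_cases j <;> simp [cons_val_five', cons_val_six'] <;> ring

lemma diag_c1 (M : Matrix (Fin 3) (Fin 3) ℂ) (j : Fin 7) :
    ip c1 (applyAt M j c1) = 3 * (M 0 0 + M 1 1 + M 2 2) := by
  unfold c1
  simp (config := { decide := true }) only [applyAt_add, ip_add_left, ip_add_right,
    term_diag, term_far]
  fin_cases j <;> simp [cons_val_five', cons_val_six'] <;> ring

lemma diag_c2 (M : Matrix (Fin 3) (Fin 3) ℂ) (j : Fin 7) :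
    ip c2 (applyAt M j c2) = 3 * (M 0 0 + M 1 1 + M 2 2) := by
  unfold c2
  simp (config := { decide := true }) only [applyAt_add, ip_add_left, ip_add_right,
    term_diag, term_far]
  fin_cases j <;> simp [cons_val_five', cons_val_six'] <;> ring

/-- Necessary condition for error correction: for every single-qutrit error σ in
{X₁, X₂, Z₁, Z₂, X₁Z₁, X₁Z₂, X₂Z₁, X₂Z₂} and every position j, the three diagonal
matrix elements ⟨i_L| σ^(j) |i_L⟩ agree. -/
theorem necessary_condition_diagonal_elements :
    ∀ σ ∈ ({X1, X2, Z1, Z2, X1 * Z1, X1 * Z2, X2 * Z1, X2 * Z2} :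
        Set (Matrix (Fin 3) (Fin 3) ℂ)),
      ∀ j : Fin 7,
        ip c0 (applyAt σ j c0) = ip c1 (applyAt σ j c1) ∧
        ip c1 (applyAt σ j c1) = ip c2 (applyAt σ j c2) := by
  intro σ _ j
  exact ⟨by rw [diag_c0, diag_c1], by rw [diag_c1, diag_c2]⟩
end
end

section
/- The weight-2 operator W = Z₁⊗I⊗Z₁⊗I⊗I⊗I⊗I commutes with all six stabilizers: W·S_k = S_k·W for every k ∈ {1,2,3,4,5,6}. (This witnesses that the code distance is less than 3 in the usual sense.) -/
open Complex Matrix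

noncomputable section

/-- The weight-2 operator W = Z₁⊗I⊗Z₁⊗I⊗I⊗I⊗I. -/
def W : V → V := act ![Z1, 1, Z1, 1, 1, 1, 1]


lemma hω3 : ω ^ 3 = 1 := by
  rw [ω, ← Complex.exp_nat_mul]
  rw [show ((3:ℕ) : ℂ) * (2 * (Real.pi : ℂ) * Complex.I / 3) = 2 * Real.pi * Complex.I by
    push_cast; ring]
  exact Complex.exp_two_pi_mul_I

lemma hZX1 : Z1 * X1 = ω • (X1 * Z1) := by
  ext i j
  fin_cases i <;> fin_cases j <;>
    simp [Z1, X1, Matrix.mul_apply, Fin.sum_univ_three, Matrix.diagonal] <;>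
    first | linear_combination (0:ℂ)*hω3 | linear_combination -hω3 | linear_combination -ω*hω3

lemma hZX2 : Z1 * X2 = (ω^2) • (X2 * Z1) := by
  ext i j
  fin_cases i <;> fin_cases j <;>
    simp [Z1, X1, X2, Matrix.mul_apply, Fin.sum_univ_three, Matrix.diagonal] <;>
    first | linear_combination (0:ℂ)*hω3 | linear_combination -hω3 | linear_combination -ω*hω3

lemma hZZ : Z1 * Z2 = Z2 * Z1 := by
  rw [Z2]; exact (mul_assoc Z1 Z1 Z1).symm

lemma vec5 {α : Type*} (a b c d e' f g : α) : (![a,b,c,d,e',f,g] : Fin 7 → α) 5 = f := rfl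
lemma vec6 {α : Type*} (a b c d e' f g : α) : (![a,b,c,d,e',f,g] : Fin 7 → α) 6 = g := rfl

lemma act_act (M N : Fin 7 → Matrix (Fin 3) (Fin 3) ℂ) (v : V) :
    act M (act N v) = act (fun j => M j * N j) v := by
  funext s
  have key : ∀ t : Fin 7 → Fin 3, (∏ j, (M j * N j) (s j) (t j))
      = ∑ u : Fin 7 → Fin 3, ∏ j, M j (s j) (u j) * N j (u j) (t j) := by
    intro t
    simp only [Matrix.mul_apply]
    rw [Finset.prod_univ_sum]
    simp [Fintype.piFinset_univ]
  simp only [act]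
  calc (∑ u : Fin 7 → Fin 3, (∏ j, M j (s j) (u j)) * ∑ t : Fin 7 → Fin 3, (∏ j, N j (u j) (t j)) * v t)
      = ∑ t : Fin 7 → Fin 3, ∑ u : Fin 7 → Fin 3, (∏ j, M j (s j) (u j)) * ((∏ j, N j (u j) (t j)) * v t) := by
        rw [Finset.sum_comm]; exact Finset.sum_congr rfl fun u _ => Finset.mul_sum ..
    _ = ∑ t : Fin 7 → Fin 3, (∏ j, (M j * N j) (s j) (t j)) * v t := by
        refine Finset.sum_congr rfl fun t _ => ?_
        rw [key, Finset.sum_mul]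
        refine Finset.sum_congr rfl fun u _ => ?_
        rw [Finset.prod_mul_distrib]
        ring

lemma act_smul (M : Fin 7 → Matrix (Fin 3) (Fin 3) ℂ) (c : Fin 7 → ℂ)
    (h : ∏ j, c j = 1) : act (fun j => c j • M j) = act M := by
  funext v s
  simp only [act, Matrix.smul_apply, smul_eq_mul, Finset.prod_mul_distrib, h, one_mul]

/-- W commutes with all six stabilizers, witnessing that the code distance is < 3. -/
theorem weight_two_operator_commutes :
    (∀ v : V, W (S1 v) = S1 (W v)) ∧
    (∀ v : V, W (S2 v) = S2 (W v)) ∧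
    (∀ v : V, W (S3 v) = S3 (W v)) ∧
    (∀ v : V, W (S4 v) = S4 (W v)) ∧
    (∀ v : V, W (S5 v) = S5 (W v)) ∧
    (∀ v : V, W (S6 v) = S6 (W v)) := by
  have easy : ∀ (A : Fin 7 → Matrix (Fin 3) (Fin 3) ℂ),
      (fun j => (![Z1,1,Z1,1,1,1,1] : Fin 7 → Matrix (Fin 3) (Fin 3) ℂ) j * A j)
        = (fun j => A j * (![Z1,1,Z1,1,1,1,1] : Fin 7 → Matrix (Fin 3) (Fin 3) ℂ) j) →
      ∀ v : V, act ![Z1,1,Z1,1,1,1,1] (act A v) = act A (act ![Z1,1,Z1,1,1,1,1] v) := by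
    intro A h v
    rw [act_act, act_act, h]
  refine ⟨?_, easy _ ?_, easy _ ?_, easy _ ?_, easy _ ?_, easy _ ?_⟩
  · intro v
    show act ![Z1,1,Z1,1,1,1,1] (act ![X1,1,X2,1,X1,1,X2] v)
        = act ![X1,1,X2,1,X1,1,X2] (act ![Z1,1,Z1,1,1,1,1] v)
    rw [act_act, act_act]
    have h : (fun j => (![Z1,1,Z1,1,1,1,1] : Fin 7 → Matrix (Fin 3) (Fin 3) ℂ) j * ![X1,1,X2,1,X1,1,X2] j)
        = fun j => (![ω,1,ω^2,1,1,1,1] : Fin 7 → ℂ) j •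
            ((![X1,1,X2,1,X1,1,X2] : Fin 7 → Matrix (Fin 3) (Fin 3) ℂ) j * ![Z1,1,Z1,1,1,1,1] j) := by
      funext j
      fin_cases j <;> simp [Matrix.cons_val_succ, vec5, vec6, hZX1, hZX2]
    have hc : ∏ j, (![ω,1,ω^2,1,1,1,1] : Fin 7 → ℂ) j = 1 := by
      simp [Fin.prod_univ_seven, Matrix.cons_val_succ, vec5, vec6]
      linear_combination hω3
    rw [h]
    exact congrFun (act_smul
      (fun j => (![X1,1,X2,1,X1,1,X2] : Fin 7 → Matrix (Fin 3) (Fin 3) ℂ) j * ![Z1,1,Z1,1,1,1,1] j)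
      ![ω,1,ω^2,1,1,1,1] hc) v
  all_goals funext j
  all_goals fin_cases j <;> simp [Matrix.cons_val_succ, vec5, vec6, hZZ]
end
end
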